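/- For every integer k ≥ 2, the value g_k(α) = (α - 1)/((k+1)α² - 3kα + k - 1) satisfies 0.276 < g_k(α) < 0.5, where α is the unique positive real root of x^k - 2x^{k-1} - ... - x - 1. -/

import Mathlib

/-- For every integer k ≥ 2, `0.276 < g_k(α) < 0.5` where
`g_k(z) = (z - 1)/((k+1)z² - 3kz + k - 1)` and α is the unique positive real root of
`x^k - 2x^(k-1) - ⋯ - x - 1`. -/
theorem g_k_alpha_bounds (k : ℕ) (hk : 2 ≤ k)
    (α : ℝ) (hαpos : 0 < α)
    (hαroot : α ^ k - 2 * α ^ (k - 1) - ∑ i ∈ Finset.range (k - 1), α ^ i = 0) :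
    0.276 < (α - 1) / (((k : ℝ) + 1) * α ^ 2 - 3 * (k : ℝ) * α + (k : ℝ) - 1) ∧
    (α - 1) / (((k : ℝ) + 1) * α ^ 2 - 3 * (k : ℝ) * α + (k : ℝ) - 1) < 0.5 := by
  obtain ⟨m, rfl⟩ : ∃ m, k = m + 2 := ⟨k - 2, by omega⟩
  have hroot : α ^ (m + 2) - 2 * α ^ (m + 1) - ∑ i ∈ Finset.range (m + 1), α ^ i = 0 := by
    simpa using hαroot
  have hPpos : 0 < α ^ (m + 1) := pow_pos hαpos _
  have hsum : (∑ i ∈ Finset.range (m + 1), α ^ i) * (α - 1) = α ^ (m + 1) - 1 :=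
    geom_sum_mul α (m + 1)
  have hS1 : (1 : ℝ) ≤ ∑ i ∈ Finset.range (m + 1), α ^ i := by
    have h0 : (0 : ℕ) ∈ Finset.range (m + 1) := Finset.mem_range.mpr (Nat.succ_pos m)
    have := Finset.single_le_sum (f := fun i => α ^ i)
      (fun i _ => (pow_pos hαpos i).le) h0
    simpa using this
  have h2 : 2 < α := by
    by_contra h
    push_neg at h
    have hk2 : α ^ (m + 2) ≤ 2 * α ^ (m + 1) := by
      have : α ^ (m + 2) = α * α ^ (m + 1) := by ring
      rw [this]
      nlinarith
    linarith
  have hE : α ^ (m + 1) * (α ^ 2 - 3 * α + 1) = -1 := by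
    linear_combination (α - 1) * hroot + hsum
  have hKP : (m : ℝ) + 2 < α ^ (m + 1) := by
    have h1 : (m + 2 : ℕ) ≤ 2 ^ (m + 1) := Nat.lt_two_pow_self (n := m + 1)
    have h1' : ((m : ℝ) + 2) ≤ 2 ^ (m + 1) := by exact_mod_cast h1
    have h2' : (2 : ℝ) ^ (m + 1) < α ^ (m + 1) :=
      pow_lt_pow_left₀ h2 (by norm_num) (Nat.succ_ne_zero m)
    linarith
  have hneg : α ^ 2 - 3 * α + 1 < 0 := by
    by_contra h
    push_neg at h
    nlinarith [mul_nonneg hPpos.le h]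
  have hα : α < 2.619 := by nlinarith [sq_nonneg (α - 2.62)]
  push_cast
  set D : ℝ := ((m : ℝ) + 2 + 1) * α ^ 2 - 3 * ((m : ℝ) + 2) * α + ((m : ℝ) + 2) - 1 with hD
  have hPD : α ^ (m + 1) * D = α ^ (m + 1) * (α ^ 2 - 1) - ((m : ℝ) + 2) := by
    rw [hD]; linear_combination ((m : ℝ) + 2) * hE
  have hDgt : 2 * (α - 1) < D := by
    have h1 : α ^ (m + 1) * (2 * (α - 1)) < α ^ (m + 1) * D := by
      rw [hPD]
      nlinarith [mul_pos hPpos (show (0 : ℝ) < α * (α - 2) by nlinarith)]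
    exact lt_of_mul_lt_mul_left h1 hPpos.le
  have hDlt : D < α ^ 2 - 1 := by
    have h1 : α ^ (m + 1) * D < α ^ (m + 1) * (α ^ 2 - 1) := by
      rw [hPD]; linarith
    exact lt_of_mul_lt_mul_left h1 hPpos.le
  have hDpos : 0 < D := by linarith
  constructor
  · have hA : (0.276 : ℝ) < (α - 1) / (α ^ 2 - 1) := by
      rw [lt_div_iff₀ (by nlinarith : (0 : ℝ) < α ^ 2 - 1)]
      nlinarith [mul_pos (show (0 : ℝ) < α - 2 by linarith)
        (show (0 : ℝ) < 2.619 - α by linarith)]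
    have hB : (α - 1) / (α ^ 2 - 1) < (α - 1) / D :=
      div_lt_div_of_pos_left (by linarith) hDpos hDlt
    linarith
  · rw [div_lt_iff₀ hDpos]
    linarith
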